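/- Let γ₀, γ₁ ≠ 0, s > 0, q₋ = q₋(s) as above, and define F : ℕ → ℂ by F(2n) = ((γ₁ + γ₀·q₋)/(s·γ₁))·q₋ⁿ and F(2n+1) = (i/γ₁)·q₋^{n+1}. Then F satisfies the recurrence relations i·(s·F(0) - 1) = γ₀·F(1), i·s·F(2n) = γ₁·F(2n-1) + γ₀·F(2n+1) for n ≥ 1, and i·s·F(2n+1) = γ₀·F(2n) + γ₁·F(2n+2) for n ≥ 0. -/

import Mathlib

theorem laplace_recurrence (γ₀ γ₁ s : ℝ) (h₀ : γ₀ ≠ 0) (h₁ : γ₁ ≠ 0) (hs : 0 < s)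
    (qm : ℝ)
    (hqm : qm = -((Real.sqrt (s^2 + (γ₀ + γ₁)^2) - Real.sqrt (s^2 + (γ₀ - γ₁)^2))^2 / (4 * γ₀ * γ₁)))
    (F : ℕ → ℂ)
    (hFeven : ∀ n : ℕ, F (2 * n) = (((γ₁ + γ₀ * qm) / (s * γ₁) : ℝ) : ℂ) * (qm : ℂ)^n)
    (hFodd : ∀ n : ℕ, F (2 * n + 1) = (Complex.I / γ₁) * (qm : ℂ)^(n + 1)) :
    Complex.I * ((s : ℂ) * F 0 - 1) = (γ₀ : ℂ) * F 1 ∧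
    (∀ n : ℕ, 1 ≤ n →
      Complex.I * (s : ℂ) * F (2 * n) = (γ₁ : ℂ) * F (2 * n - 1) + (γ₀ : ℂ) * F (2 * n + 1)) ∧
    (∀ n : ℕ,
      Complex.I * (s : ℂ) * F (2 * n + 1) = (γ₀ : ℂ) * F (2 * n) + (γ₁ : ℂ) * F (2 * n + 2)) := by
  have hsne : (s:ℝ) ≠ 0 := ne_of_gt hs
  have hsC : (s:ℂ) ≠ 0 := by exact_mod_cast hsne
  have h0C : (γ₀:ℂ) ≠ 0 := by exact_mod_cast h₀
  have h1C : (γ₁:ℂ) ≠ 0 := by exact_mod_cast h₁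
  -- the quadratic satisfied by qm
  have hq : γ₀*γ₁*qm^2 + (s^2+γ₀^2+γ₁^2)*qm + γ₀*γ₁ = 0 := by
    set A := Real.sqrt (s^2 + (γ₀ + γ₁)^2) with hA
    set B := Real.sqrt (s^2 + (γ₀ - γ₁)^2) with hB
    have hA2 : A^2 = s^2 + (γ₀ + γ₁)^2 := Real.sq_sqrt (by positivity)
    have hB2 : B^2 = s^2 + (γ₀ - γ₁)^2 := Real.sq_sqrt (by positivity)
    have ht2 : (A*B)^2 = (s^2+γ₀^2+γ₁^2)^2 - 4*γ₀^2*γ₁^2 := by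
      rw [mul_pow, hA2, hB2]; ring
    have h5 : 4*γ₀*γ₁*qm = 2*(A*B) - 2*(s^2+γ₀^2+γ₁^2) := by
      rw [hqm]; field_simp; linear_combination -hA2 - hB2
    have key : 16*γ₀^2*γ₁^2*(γ₀*γ₁*qm^2 + (s^2+γ₀^2+γ₁^2)*qm + γ₀*γ₁) = 0 := by
      linear_combination (γ₀*γ₁*(4*γ₀*γ₁*qm+2*(A*B)+2*(s^2+γ₀^2+γ₁^2)))*h5 + (4*γ₀*γ₁)*ht2
    have h16 : (16*γ₀^2*γ₁^2 : ℝ) ≠ 0 := by positivity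
    exact (mul_eq_zero.mp key).resolve_left h16
  have hqC : (γ₀:ℂ)*(γ₁:ℂ)*(qm:ℂ)^2 + ((s:ℂ)^2+(γ₀:ℂ)^2+(γ₁:ℂ)^2)*(qm:ℂ) + (γ₀:ℂ)*(γ₁:ℂ) = 0 := by
    exact_mod_cast congrArg (fun x : ℝ => (x : ℂ)) hq
  refine ⟨?_, ?_, ?_⟩
  · have e0 : F 0 = (((γ₁ + γ₀ * qm) / (s * γ₁) : ℝ) : ℂ) * (qm : ℂ)^0 := hFeven 0
    have e1 : F 1 = (Complex.I / γ₁) * (qm : ℂ)^1 := hFodd 0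
    rw [e0, e1]
    push_cast
    field_simp
    ring
  · intro n h
    obtain ⟨m, rfl⟩ : ∃ m, n = m + 1 := ⟨n - 1, by omega⟩
    have e1 : 2 * (m + 1) - 1 = 2 * m + 1 := by omega
    rw [e1, hFodd m, hFodd (m + 1), hFeven (m + 1)]
    push_cast
    field_simp
    ring
  · intro n
    have e2 : 2 * n + 2 = 2 * (n + 1) := by omega
    rw [e2, hFodd n, hFeven n, hFeven (n + 1)]
    push_cast
    field_simp
    linear_combination (-(qm:ℂ)^n) * hqC + ((s:ℂ)^2*(qm:ℂ)*(qm:ℂ)^n) * Complex.I_sq
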